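/- Let u, v be nonzero integers and m an integer with m ≥ 15. Suppose 7u² + 59v² = 3^m, 3 divides u, and 2u + v = 3⁵·λ for some nonzero integer λ not divisible by 3. Then gcd(u, v) = 3⁵. -/

import Mathlib

theorem stmt3 (u v : ℤ) (hu : u ≠ 0) (hv : v ≠ 0) (m : ℕ) (hm : 15 ≤ m)
    (h : 7*u^2 + 59*v^2 = 3^m) (h3u : (3 : ℤ) ∣ u)
    (l : ℤ) (hl : l ≠ 0) (hl3 : ¬ (3 : ℤ) ∣ l) (hlam : 2*u + v = 3^5 * l) :
    Int.gcd u v = 3^5 := by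
  have hvdef : v = 3^5*l - 2*u := by linarith
  have hpow : (3:ℤ)^m = 3^5 * 3^(m-5) := by
    rw [← pow_add]; congr 1; omega
  have hE : u^2 - 236*(u*l) + 59*3^5*l^2 = 3^(m-5) := by
    apply mul_left_cancel₀ (show ((3:ℤ)^5) ≠ 0 by norm_num)
    rw [← hpow, ← h, hvdef]; ring
  have hp3 : Prime (3:ℤ) := Int.prime_three
  have step : ∀ k : ℕ, 1 ≤ k → k ≤ 4 → (3:ℤ)^k ∣ u → (3:ℤ)^(k+1) ∣ u := by
    intro k h1 h4 ⟨w, hw⟩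
    have hd1 : (3:ℤ)^(k+1) ∣ u^2 := by
      rw [hw, mul_pow, ← pow_mul]
      exact Dvd.dvd.mul_right (pow_dvd_pow 3 (by omega)) _
    have hd2 : (3:ℤ)^(k+1) ∣ 59*3^5*l^2 := by
      refine Dvd.dvd.mul_right (Dvd.dvd.mul_left (pow_dvd_pow 3 (by omega)) _) _
    have hd3 : (3:ℤ)^(k+1) ∣ 3^(m-5) := pow_dvd_pow 3 (by omega)
    have hd4 : (3:ℤ)^(k+1) ∣ 236*(u*l) := by
      have : 236*(u*l) = u^2 + 59*3^5*l^2 - 3^(m-5) := by linarith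
      rw [this]; exact dvd_sub (dvd_add hd1 hd2) hd3
    have hcancel : (3:ℤ) ∣ 236*(w*l) := by
      have h3k : ((3:ℤ)^k) ≠ 0 := by positivity
      have : (3:ℤ)^k * 3 ∣ (3:ℤ)^k * (236*(w*l)) := by
        rw [← pow_succ]
        convert hd4 using 1
        rw [hw]; ring
      exact (mul_dvd_mul_iff_left h3k).mp this
    have h3w : (3:ℤ) ∣ w := by
      rcases hp3.dvd_mul.mp hcancel with h' | h'
      · norm_num at h'
      · rcases hp3.dvd_mul.mp h' with h'' | h''
        · exact h''
        · exact absurd h'' hl3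
    obtain ⟨t, ht⟩ := h3w
    exact ⟨t, by rw [hw, ht, pow_succ]; ring⟩
  have h1 : (3:ℤ)^1 ∣ u := by simpa using h3u
  have h5u : (3:ℤ)^5 ∣ u := step 4 (by norm_num) (by norm_num)
    (step 3 (by norm_num) (by norm_num) (step 2 (by norm_num) (by norm_num)
    (step 1 (by norm_num) (by norm_num) h1)))
  have h5v : (3:ℤ)^5 ∣ v := by
    rw [hvdef]
    exact dvd_sub (Dvd.dvd.mul_right (dvd_refl _) l) (Dvd.dvd.mul_left h5u 2)
  -- gcd divides 3^m
  set d : ℕ := Int.gcd u v with hd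
  have hdu : (d:ℤ) ∣ u := Int.gcd_dvd_left u v
  have hdv : (d:ℤ) ∣ v := Int.gcd_dvd_right u v
  have hd3m : (d:ℤ) ∣ 3^m := by
    have : (d:ℤ) ∣ 7*u^2 + 59*v^2 :=
      dvd_add (Dvd.dvd.mul_left (dvd_pow hdu two_ne_zero) 7)
        (Dvd.dvd.mul_left (dvd_pow hdv two_ne_zero) 59)
    rwa [h] at this
  have hd3mN : d ∣ 3^m := by
    have h' : (d:ℤ) ∣ ((3^m : ℕ) : ℤ) := by push_cast; exact hd3m
    exact_mod_cast h'
  obtain ⟨j, hjm, hdj⟩ := (Nat.dvd_prime_pow Nat.prime_three).mp hd3mN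
  have h5d : (5:ℕ) ≤ j := by
    have : (3:ℕ)^5 ∣ d := by
      have h5 : ((3:ℕ)^5 : ℤ) ∣ Int.gcd u v := Int.dvd_coe_gcd (by push_cast; exact h5u) (by push_cast; exact h5v)
      exact_mod_cast h5
    rw [hdj] at this
    exact (Nat.pow_dvd_pow_iff_le_right (by norm_num)).mp this
  have hj5 : j ≤ 5 := by
    by_contra hc
    push_neg at hc
    have hdvl : (d:ℤ) ∣ 3^5 * l := by rw [← hlam]; exact dvd_add (Dvd.dvd.mul_left hdu 2) hdv
    have h6 : (3:ℤ)^6 ∣ 3^5 * l := by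
      refine dvd_trans ?_ hdvl
      rw [hdj]; push_cast
      exact pow_dvd_pow 3 hc
    have : (3:ℤ)^5 * 3 ∣ (3:ℤ)^5 * l := by rw [← pow_succ]; exact h6
    exact hl3 ((mul_dvd_mul_iff_left (show ((3:ℤ)^5) ≠ 0 by norm_num)).mp this)
  have : j = 5 := le_antisymm hj5 h5d
  rw [hdj, this]
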